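/- (Vaccination cannot increase SIR extent.) In the discrete-time SIR model, vaccinating a set W of nodes—modeled as setting their removal probability to 1 (equivalently, they never transmit), or as removing them from the susceptible pool—never increases the mean final extent among the remaining nodes: the expected number of ultimately infected nodes in V \ W with vaccination is at most the expected number of ultimately infected nodes in V \ W without vaccination. -/
import Mathlib



open Finset

/-- A full assignment of random coins for the epidemic: initial-infection coins,
removal coins, and per-(ordered-)edge transmission coins. -/
abbrev Coins (V : Type*) := (V → Bool) × (V → Bool) × (V → V → Bool)

variable {V : Type*} [Fintype V] [DecidableEq V]

/-- Probability weight of a coin outcome `ω` under induction probabilities `σ`,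
removal probabilities `γ` and transmission probabilities `τ`. -/
def coinWeight (σ γ : V → ℝ) (τ : V → V → ℝ) (ω : Coins V) : ℝ :=
  (∏ v, if ω.1 v then σ v else 1 - σ v) *
  (∏ v, if ω.2.1 v then γ v else 1 - γ v) *
  ∏ u, ∏ v, if ω.2.2 u v then τ u v else 1 - τ u v

/-- One step of the discrete-time SIR process: state is `(I, R)`.
An infected node, unless removed (removal coin `true`), transmits to each
susceptible out-neighbour whose transmission coin is `true`; then it recovers. -/
def sirStep (A : V → V → Bool) (ω : Coins V) (p : Finset V × Finset V) :
    Finset V × Finset V :=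
  (univ.filter (fun v => v ∉ p.1 ∧ v ∉ p.2 ∧
      ∃ u ∈ p.1, ω.2.1 u = false ∧ A u v = true ∧ ω.2.2 u v = true),
   p.2 ∪ p.1)

/-- The discrete-time SIR process `(I_t, R_t)`; susceptibles are the complement. -/
def sirProc (A : V → V → Bool) (ω : Coins V) : ℕ → Finset V × Finset V
  | 0 => (univ.filter (fun v => ω.1 v = true), ∅)
  | t + 1 => sirStep A ω (sirProc A ω t)

/-- The set of ever-infected nodes (the epidemic is stationary by time `n = |V|`). -/
def everInf (A : V → V → Bool) (ω : Coins V) : Finset V :=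
  (sirProc A ω (Fintype.card V)).1 ∪ (sirProc A ω (Fintype.card V)).2

/-- The mean final extent `E(|R_n|)` of the SIR epidemic. -/
def meanExtent (A : V → V → Bool) (σ γ : V → ℝ) (τ : V → V → ℝ) : ℝ :=
  ∑ ω : Coins V, coinWeight σ γ τ ω * ((everInf A ω).card : ℝ)

/-- The probability that node `u` is ultimately infected. -/
def probInf (A : V → V → Bool) (σ γ : V → ℝ) (τ : V → V → ℝ) (u : V) : ℝ :=
  ∑ ω : Coins V, coinWeight σ γ τ ω * (if u ∈ everInf A ω then 1 else 0)

/-- The expected number of ultimately infected nodes belonging to the set `D`. -/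
def meanExtentOn (A : V → V → Bool) (σ γ : V → ℝ) (τ : V → V → ℝ) (D : Finset V) : ℝ :=
  ∑ ω : Coins V, coinWeight σ γ τ ω * (((everInf A ω) ∩ D).card : ℝ)

/-! ### Auxiliary developments -/

/-- The set of nodes ever infected by time `t`. -/
def Ever (A : V → V → Bool) (ω : Coins V) (t : ℕ) : Finset V :=
  (sirProc A ω t).1 ∪ (sirProc A ω t).2

lemma Ever_mono_succ (A : V → V → Bool) (ω : Coins V) (t : ℕ) :
    Ever A ω t ⊆ Ever A ω (t + 1) := by
  intro v hv
  have h2 : (sirProc A ω (t+1)).2 = (sirProc A ω t).2 ∪ (sirProc A ω t).1 := rfl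
  unfold Ever at hv ⊢
  rw [Finset.mem_union] at hv
  rw [h2, Finset.mem_union, Finset.mem_union]
  tauto

lemma Ever_mono (A : V → V → Bool) (ω : Coins V) {s t : ℕ} (h : s ≤ t) :
    Ever A ω s ⊆ Ever A ω t := by
  induction h with
  | refl => exact Finset.Subset.refl _
  | step _ ih => exact ih.trans (Ever_mono_succ _ _ _)

lemma exists_step (A : V → V → Bool) (ω : Coins V) :
    ∀ t, ∀ u ∈ Ever A ω t, ∃ s, s ≤ t ∧ u ∈ (sirProc A ω s).1 := by
  intro t
  induction t with
  | zero =>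
    intro u hu
    refine ⟨0, le_rfl, ?_⟩
    have h2 : (sirProc A ω 0).2 = ∅ := rfl
    unfold Ever at hu
    rw [h2, Finset.union_empty] at hu
    exact hu
  | succ t ih =>
    intro u hu
    unfold Ever at hu
    rcases Finset.mem_union.mp hu with h | h
    · exact ⟨t+1, le_rfl, h⟩
    · have h2 : (sirProc A ω (t+1)).2 = (sirProc A ω t).2 ∪ (sirProc A ω t).1 := rfl
      rw [h2, Finset.mem_union] at h
      have hu' : u ∈ Ever A ω t := by
        unfold Ever; rw [Finset.mem_union]; tauto
      obtain ⟨s, hs, h'⟩ := ih u hu'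
      exact ⟨s, hs.trans (Nat.le_succ t), h'⟩

lemma transmit (A : V → V → Bool) (ω : Coins V) {u v : V} {s : ℕ}
    (hu : u ∈ (sirProc A ω s).1) (hc : ω.2.1 u = false)
    (hA : A u v = true) (he : ω.2.2 u v = true) : v ∈ Ever A ω (s + 1) := by
  by_cases hv : v ∈ Ever A ω s
  · exact Ever_mono_succ A ω s hv
  · unfold Ever at hv ⊢
    rw [Finset.mem_union] at hv
    rw [Finset.mem_union]
    left
    show v ∈ (sirStep A ω (sirProc A ω s)).1
    unfold sirStep
    simp only [Finset.mem_filter, Finset.mem_univ, true_and]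
    push_neg at hv
    exact ⟨hv.1, hv.2, u, hu, hc, hA, he⟩

lemma Ever_subset (A : V → V → Bool) (a c c' : V → Bool) (e : V → V → Bool)
    (hcc : ∀ u, c u = true → c' u = true) :
    ∀ t, Ever A (a, c', e) t ⊆ Ever A (a, c, e) t := by
  intro t
  induction t with
  | zero =>
    intro v hv
    unfold Ever sirProc at hv ⊢
    exact hv
  | succ t ih =>
    intro v hv
    unfold Ever at hv
    rcases Finset.mem_union.mp hv with h | h
    · have h' : v ∈ (sirStep A (a, c', e) (sirProc A (a, c', e) t)).1 := h
      unfold sirStep at h'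
      simp only [Finset.mem_filter, Finset.mem_univ, true_and] at h'
      obtain ⟨-, -, u, huI, hcu', hA, he⟩ := h'
      have huE : u ∈ Ever A (a, c, e) t := by
        apply ih
        unfold Ever
        exact Finset.mem_union.mpr (Or.inl huI)
      obtain ⟨s, hs, huIs⟩ := exists_step A (a, c, e) t u huE
      have hcu : c u = false := by
        cases hcase : c u with
        | false => rfl
        | true => rw [hcc u hcase] at hcu'; exact absurd hcu' (by simp)
      have hv' : v ∈ Ever A (a, c, e) (s + 1) := transmit A (a, c, e) huIs hcu hA he
      exact Ever_mono A (a, c, e) (Nat.succ_le_succ hs) hv'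
    · have h2 : (sirProc A (a, c', e) (t+1)).2
          = (sirProc A (a, c', e) t).2 ∪ (sirProc A (a, c', e) t).1 := rfl
      rw [h2, Finset.mem_union] at h
      have hv' : v ∈ Ever A (a, c', e) t := by
        unfold Ever; rw [Finset.mem_union]; tauto
      exact Ever_mono_succ A (a, c, e) t (ih hv')

lemma everInf_subset (A : V → V → Bool) (a c c' : V → Bool) (e : V → V → Bool)
    (hcc : ∀ u, c u = true → c' u = true) :
    everInf A (a, c', e) ⊆ everInf A (a, c, e) :=
  Ever_subset A a c c' e hcc (Fintype.card V)

lemma coinWeight_nonneg (σ γ : V → ℝ) (τ : V → V → ℝ)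
    (hσ : ∀ v, 0 ≤ σ v ∧ σ v ≤ 1) (hγ : ∀ v, 0 ≤ γ v ∧ γ v ≤ 1)
    (hτ : ∀ u v, 0 ≤ τ u v ∧ τ u v ≤ 1) (ω : Coins V) :
    0 ≤ coinWeight σ γ τ ω := by
  unfold coinWeight
  refine mul_nonneg (mul_nonneg ?_ ?_) ?_
  · exact Finset.prod_nonneg fun v _ => by split <;> linarith [(hσ v).1, (hσ v).2]
  · exact Finset.prod_nonneg fun v _ => by split <;> linarith [(hγ v).1, (hγ v).2]
  · exact Finset.prod_nonneg fun u _ => Finset.prod_nonneg fun v _ => by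
      split <;> linarith [(hτ u v).1, (hτ u v).2]

lemma key (δ : V → ℝ) (w : V) (h : (V → Bool) → ℝ) :
    (∑ c : V → Bool,
        (∏ v, if c v then Function.update δ w 1 v else 1 - Function.update δ w 1 v) * h c)
    = ∑ c : V → Bool, (∏ v, if c v then δ v else 1 - δ v) * h (Function.update c w true) := by
  classical
  rw [← Finset.sum_filter_add_sum_filter_not Finset.univ (fun c => c w = true)
    (fun c => (∏ v, if c v then Function.update δ w 1 v else 1 - Function.update δ w 1 v) * h c)]
  rw [← Finset.sum_filter_add_sum_filter_not Finset.univ (fun c => c w = true)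
    (fun c => (∏ v, if c v then δ v else 1 - δ v) * h (Function.update c w true))]
  have hzero : ∑ c ∈ Finset.univ.filter (fun c : V → Bool => ¬ c w = true),
      (∏ v, if c v then Function.update δ w 1 v else 1 - Function.update δ w 1 v) * h c = 0 := by
    apply Finset.sum_eq_zero
    intro c hc
    rw [Finset.mem_filter] at hc
    have hcw : c w = false := by simpa using hc.2
    have hp : (∏ v, if c v then Function.update δ w 1 v else 1 - Function.update δ w 1 v) = 0 := by
      apply Finset.prod_eq_zero (Finset.mem_univ w)
      simp [hcw]
    rw [hp, zero_mul]
  rw [hzero, add_zero]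
  have hfix : ∑ c ∈ Finset.univ.filter (fun c : V → Bool => c w = true),
      (∏ v, if c v then δ v else 1 - δ v) * h (Function.update c w true)
      = ∑ c ∈ Finset.univ.filter (fun c : V → Bool => c w = true),
      (∏ v, if c v then δ v else 1 - δ v) * h c := by
    refine Finset.sum_congr rfl fun c hc => ?_
    rw [Finset.mem_filter] at hc
    have hu : Function.update c w true = c := by
      rw [← hc.2]; exact Function.update_eq_self w c
    rw [hu]
  rw [hfix]
  have hflip : ∑ c ∈ Finset.univ.filter (fun c : V → Bool => ¬ c w = true),
      (∏ v, if c v then δ v else 1 - δ v) * h (Function.update c w true)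
      = ∑ c ∈ Finset.univ.filter (fun c : V → Bool => c w = true),
      (∏ v, if Function.update c w false v then δ v else 1 - δ v) * h c := by
    apply Finset.sum_nbij' (i := fun c => Function.update c w true)
      (j := fun c => Function.update c w false)
    · intro c hc; simp
    · intro c hc; simp
    · intro c hc
      rw [Finset.mem_filter] at hc
      have hcw : c w = false := by simpa using hc.2
      rw [Function.update_idem, ← hcw, Function.update_eq_self]
    · intro c hc
      rw [Finset.mem_filter] at hc
      rw [Function.update_idem, ← hc.2, Function.update_eq_self]
    · intro c hc
      rw [Finset.mem_filter] at hc
      have hcw : c w = false := by simpa using hc.2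
      have hb : Function.update (Function.update c w true) w false = c := by
        rw [Function.update_idem, ← hcw, Function.update_eq_self]
      rw [hb]
  rw [hflip, ← Finset.sum_add_distrib]
  refine Finset.sum_congr rfl fun c hc => ?_
  rw [Finset.mem_filter] at hc
  have hcw : c w = true := hc.2
  rw [mul_comm _ (h c), mul_comm _ (h c), mul_comm _ (h c), ← mul_add]
  congr 1
  rw [← Finset.mul_prod_erase Finset.univ
      (fun v => if c v then Function.update δ w 1 v else 1 - Function.update δ w 1 v)
      (Finset.mem_univ w),
    ← Finset.mul_prod_erase Finset.univ (fun v => if c v then δ v else 1 - δ v)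
      (Finset.mem_univ w),
    ← Finset.mul_prod_erase Finset.univ
      (fun v => if Function.update c w false v then δ v else 1 - δ v) (Finset.mem_univ w)]
  have e1 : (∏ v ∈ Finset.univ.erase w,
      (if c v then Function.update δ w 1 v else 1 - Function.update δ w 1 v))
      = ∏ v ∈ Finset.univ.erase w, (if c v then δ v else 1 - δ v) :=
    Finset.prod_congr rfl fun v hv => by
      rw [Function.update_of_ne (Finset.ne_of_mem_erase hv)]
  have e2 : (∏ v ∈ Finset.univ.erase w,
      (if Function.update c w false v then δ v else 1 - δ v))
      = ∏ v ∈ Finset.univ.erase w, (if c v then δ v else 1 - δ v) :=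
    Finset.prod_congr rfl fun v hv => by
      rw [Function.update_of_ne (Finset.ne_of_mem_erase hv)]
  rw [e1, e2]
  simp only [hcw, if_true, Function.update_self, Bool.false_eq_true, if_false]
  ring

lemma keyCoins (σ δ : V → ℝ) (τ : V → V → ℝ) (w : V) (f : Coins V → ℝ) :
    (∑ ω : Coins V, coinWeight σ (Function.update δ w 1) τ ω * f ω)
    = ∑ ω : Coins V, coinWeight σ δ τ ω * f (ω.1, Function.update ω.2.1 w true, ω.2.2) := by
  simp only [Fintype.sum_prod_type]
  refine Finset.sum_congr rfl fun a _ => ?_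
  calc (∑ b : V → Bool, ∑ c : V → V → Bool,
          coinWeight σ (Function.update δ w 1) τ (a, b, c) * f (a, b, c))
      = ∑ b : V → Bool,
          (∏ v, if b v then Function.update δ w 1 v else 1 - Function.update δ w 1 v) *
          (∑ c : V → V → Bool,
            ((∏ v, if a v then σ v else 1 - σ v) *
             ∏ u, ∏ v, if c u v then τ u v else 1 - τ u v) * f (a, b, c)) := by
        refine Finset.sum_congr rfl fun b _ => ?_
        rw [Finset.mul_sum]
        refine Finset.sum_congr rfl fun c _ => ?_
        simp only [coinWeight]
        ring
    _ = ∑ b : V → Bool, (∏ v, if b v then δ v else 1 - δ v) *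
          (∑ c : V → V → Bool,
            ((∏ v, if a v then σ v else 1 - σ v) *
             ∏ u, ∏ v, if c u v then τ u v else 1 - τ u v) *
            f (a, Function.update b w true, c)) :=
        key δ w (fun b => ∑ c : V → V → Bool,
          ((∏ v, if a v then σ v else 1 - σ v) *
           ∏ u, ∏ v, if c u v then τ u v else 1 - τ u v) * f (a, b, c))
    _ = ∑ b : V → Bool, ∑ c : V → V → Bool, coinWeight σ δ τ (a, b, c) *
          f ((a, b, c).1, Function.update (a, b, c).2.1 w true, (a, b, c).2.2) := by
        refine Finset.sum_congr rfl fun b _ => ?_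
        rw [Finset.mul_sum]
        refine Finset.sum_congr rfl fun c _ => ?_
        simp only [coinWeight]
        ring

lemma forceId (σ γ : V → ℝ) (τ : V → V → ℝ) (W : Finset V) (f : Coins V → ℝ) :
    (∑ ω : Coins V, coinWeight σ (fun v => if v ∈ W then 1 else γ v) τ ω * f ω)
    = ∑ ω : Coins V, coinWeight σ γ τ ω *
        f (ω.1, fun v => if v ∈ W then true else ω.2.1 v, ω.2.2) := by
  classical
  induction W using Finset.induction_on generalizing f with
  | empty => simp
  | @insert a s ha ih =>
    have hupd : (fun v => if v ∈ insert a s then (1:ℝ) else γ v)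
        = Function.update (fun v => if v ∈ s then (1:ℝ) else γ v) a 1 := by
      funext v
      rcases eq_or_ne v a with rfl | hv
      · simp
      · simp [Function.update_of_ne hv, Finset.mem_insert, hv]
    rw [hupd, keyCoins σ _ τ a f]
    refine Eq.trans (ih (fun ω => f (ω.1, Function.update ω.2.1 a true, ω.2.2))) ?_
    refine Finset.sum_congr rfl fun ω _ => ?_
    have hcoin : Function.update (fun v => if v ∈ s then true else ω.2.1 v) a true
        = fun v => if v ∈ insert a s then true else ω.2.1 v := by
      funext v
      rcases eq_or_ne v a with rfl | hv
      · simp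
      · simp [Function.update_of_ne hv, Finset.mem_insert, hv]
    simp only [hcoin]

/-- **vaccination cannot increase SIR extent.** Vaccinating a set `W`
of nodes — modelled by setting their removal probability to `1`, so that they are
removed immediately upon infection and never transmit — never increases the
expected number of ultimately infected nodes among the remaining nodes `V \ W`. -/

theorem sir_vaccination_cannot_increase_extent {V : Type*} [Fintype V] [DecidableEq V]
    (A : V → V → Bool) (σ γ : V → ℝ) (τ : V → V → ℝ) (W : Finset V)
    (hσ : ∀ v, 0 ≤ σ v ∧ σ v ≤ 1) (hγ : ∀ v, 0 ≤ γ v ∧ γ v ≤ 1)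
    (hτ : ∀ u v, 0 ≤ τ u v ∧ τ u v ≤ 1) :
    meanExtentOn A σ (fun v => if v ∈ W then 1 else γ v) τ (Finset.univ \ W)
      ≤ meanExtentOn A σ γ τ (Finset.univ \ W) := by
  unfold meanExtentOn
  refine le_of_eq_of_le
    (forceId σ γ τ W (fun ω => (((everInf A ω) ∩ (Finset.univ \ W)).card : ℝ))) ?_
  refine Finset.sum_le_sum fun ω _ => ?_
  refine mul_le_mul_of_nonneg_left ?_ (coinWeight_nonneg σ γ τ hσ hγ hτ ω)
  have hsub : everInf A (ω.1, fun v => if v ∈ W then true else ω.2.1 v, ω.2.2)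
      ⊆ everInf A (ω.1, ω.2.1, ω.2.2) :=
    everInf_subset A ω.1 ω.2.1 _ ω.2.2 (fun u hu => by simp [hu])
  exact_mod_cast Finset.card_le_card
    (Finset.inter_subset_inter hsub (Finset.Subset.refl _))
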